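/- There exists a finite set S of unit vectors in EuclideanSpace ℝ (Fin 3) such that the graph on S in which two vectors are adjacent if and only if they are orthogonal has chromatic number 4. -/

import Mathlib

open scoped RealInnerProductSpace

/-- The orthogonality graph on a finite set `S` of vectors in `ℝ³`: two
(distinct) vectors of `S` are adjacent iff they are orthogonal. -/
def orthGraphOn (S : Finset (EuclideanSpace ℝ (Fin 3))) :
    SimpleGraph {x : EuclideanSpace ℝ (Fin 3) // x ∈ S} where
  Adj u v := (u : EuclideanSpace ℝ (Fin 3)) ≠ (v : EuclideanSpace ℝ (Fin 3)) ∧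
    ⟪(u : EuclideanSpace ℝ (Fin 3)), (v : EuclideanSpace ℝ (Fin 3))⟫ = 0
  symm := ⟨fun u v h => by
    try dsimp only at h ⊢
    exact ⟨h.1.symm, by rw [real_inner_comm]; exact h.2⟩⟩
  loopless := ⟨fun u h => h.1 rfl⟩

noncomputable section OrthAux

def myvec (a b c : ℝ) : EuclideanSpace ℝ (Fin 3) :=
  (WithLp.equiv 2 (Fin 3 → ℝ)).symm ![a, b, c]

lemma inner_myvec (a b c d e f : ℝ) :
    ⟪myvec a b c, myvec d e f⟫ = a * d + b * e + c * f := by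
  simp [myvec, PiLp.inner_apply, Fin.sum_univ_three, RCLike.inner_apply]
  ring

lemma norm_myvec (a b c : ℝ) : ‖myvec a b c‖ = Real.sqrt (a^2 + b^2 + c^2) := by
  simp [myvec, EuclideanSpace.norm_eq, Fin.sum_univ_three, sq_abs]

lemma norm_myvec_one {a b c : ℝ} (h : a^2 + b^2 + c^2 = 1) : ‖myvec a b c‖ = 1 := by
  rw [norm_myvec, h, Real.sqrt_one]

lemma t2sq : ((Real.sqrt 2)⁻¹)^2 = (1:ℝ)/2 := by
  rw [inv_pow, Real.sq_sqrt] <;> norm_num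
lemma t3sq : ((Real.sqrt 3)⁻¹)^2 = (1:ℝ)/3 := by
  rw [inv_pow, Real.sq_sqrt] <;> norm_num
lemma t2pos : (0:ℝ) < (Real.sqrt 2)⁻¹ := by positivity
lemma t3pos : (0:ℝ) < (Real.sqrt 3)⁻¹ := by positivity
lemma s2nlt : ¬ (Real.sqrt 2 < 0) := not_lt.mpr (Real.sqrt_nonneg 2)
lemma s3nlt : ¬ (Real.sqrt 3 < 0) := not_lt.mpr (Real.sqrt_nonneg 3)
lemma s2nle : ¬ (Real.sqrt 2 ≤ 0) := not_le.mpr (Real.sqrt_pos.mpr (by norm_num))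
lemma s3nle : ¬ (Real.sqrt 3 ≤ 0) := not_le.mpr (Real.sqrt_pos.mpr (by norm_num))

def w0 : EuclideanSpace ℝ (Fin 3) := myvec (0:ℝ) (0:ℝ) (1:ℝ)
def w1 : EuclideanSpace ℝ (Fin 3) := myvec (0:ℝ) (1:ℝ) (0:ℝ)
def w2 : EuclideanSpace ℝ (Fin 3) := myvec (0:ℝ) (Real.sqrt 2)⁻¹ (Real.sqrt 2)⁻¹
def w3 : EuclideanSpace ℝ (Fin 3) := myvec (0:ℝ) (Real.sqrt 2)⁻¹ (-(Real.sqrt 2)⁻¹)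
def w4 : EuclideanSpace ℝ (Fin 3) := myvec (1:ℝ) (0:ℝ) (0:ℝ)
def w5 : EuclideanSpace ℝ (Fin 3) := myvec (Real.sqrt 2)⁻¹ (0:ℝ) (Real.sqrt 2)⁻¹
def w6 : EuclideanSpace ℝ (Fin 3) := myvec (Real.sqrt 2)⁻¹ (0:ℝ) (-(Real.sqrt 2)⁻¹)
def w7 : EuclideanSpace ℝ (Fin 3) := myvec (Real.sqrt 2)⁻¹ (Real.sqrt 2)⁻¹ (0:ℝ)
def w8 : EuclideanSpace ℝ (Fin 3) := myvec (Real.sqrt 3)⁻¹ (Real.sqrt 3)⁻¹ (Real.sqrt 3)⁻¹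
def w9 : EuclideanSpace ℝ (Fin 3) := myvec (Real.sqrt 3)⁻¹ (Real.sqrt 3)⁻¹ (-(Real.sqrt 3)⁻¹)
def w10 : EuclideanSpace ℝ (Fin 3) := myvec (Real.sqrt 2)⁻¹ (-(Real.sqrt 2)⁻¹) (0:ℝ)
def w11 : EuclideanSpace ℝ (Fin 3) := myvec (Real.sqrt 3)⁻¹ (-(Real.sqrt 3)⁻¹) (Real.sqrt 3)⁻¹
def w12 : EuclideanSpace ℝ (Fin 3) := myvec (Real.sqrt 3)⁻¹ (-(Real.sqrt 3)⁻¹) (-(Real.sqrt 3)⁻¹)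

lemma nw0 : ‖w0‖ = 1 := norm_myvec_one (by norm_num [neg_sq, t2sq, t3sq])
lemma nw1 : ‖w1‖ = 1 := norm_myvec_one (by norm_num [neg_sq, t2sq, t3sq])
lemma nw2 : ‖w2‖ = 1 := norm_myvec_one (by norm_num [neg_sq, t2sq, t3sq])
lemma nw3 : ‖w3‖ = 1 := norm_myvec_one (by norm_num [neg_sq, t2sq, t3sq])
lemma nw4 : ‖w4‖ = 1 := norm_myvec_one (by norm_num [neg_sq, t2sq, t3sq])
lemma nw5 : ‖w5‖ = 1 := norm_myvec_one (by norm_num [neg_sq, t2sq, t3sq])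
lemma nw6 : ‖w6‖ = 1 := norm_myvec_one (by norm_num [neg_sq, t2sq, t3sq])
lemma nw7 : ‖w7‖ = 1 := norm_myvec_one (by norm_num [neg_sq, t2sq, t3sq])
lemma nw8 : ‖w8‖ = 1 := norm_myvec_one (by norm_num [neg_sq, t2sq, t3sq])
lemma nw9 : ‖w9‖ = 1 := norm_myvec_one (by norm_num [neg_sq, t2sq, t3sq])
lemma nw10 : ‖w10‖ = 1 := norm_myvec_one (by norm_num [neg_sq, t2sq, t3sq])
lemma nw11 : ‖w11‖ = 1 := norm_myvec_one (by norm_num [neg_sq, t2sq, t3sq])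
lemma nw12 : ‖w12‖ = 1 := norm_myvec_one (by norm_num [neg_sq, t2sq, t3sq])

lemma e0_1 : ⟪w0, w1⟫ = 0 := by rw [w0, w1, inner_myvec]; ring
lemma e0_4 : ⟪w0, w4⟫ = 0 := by rw [w0, w4, inner_myvec]; ring
lemma e0_7 : ⟪w0, w7⟫ = 0 := by rw [w0, w7, inner_myvec]; ring
lemma e0_10 : ⟪w0, w10⟫ = 0 := by rw [w0, w10, inner_myvec]; ring
lemma e1_4 : ⟪w1, w4⟫ = 0 := by rw [w1, w4, inner_myvec]; ring
lemma e1_5 : ⟪w1, w5⟫ = 0 := by rw [w1, w5, inner_myvec]; ring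
lemma e1_6 : ⟪w1, w6⟫ = 0 := by rw [w1, w6, inner_myvec]; ring
lemma e2_3 : ⟪w2, w3⟫ = 0 := by rw [w2, w3, inner_myvec]; ring
lemma e2_4 : ⟪w2, w4⟫ = 0 := by rw [w2, w4, inner_myvec]; ring
lemma e2_9 : ⟪w2, w9⟫ = 0 := by rw [w2, w9, inner_myvec]; ring
lemma e2_11 : ⟪w2, w11⟫ = 0 := by rw [w2, w11, inner_myvec]; ring
lemma e3_4 : ⟪w3, w4⟫ = 0 := by rw [w3, w4, inner_myvec]; ring
lemma e3_8 : ⟪w3, w8⟫ = 0 := by rw [w3, w8, inner_myvec]; ring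
lemma e3_12 : ⟪w3, w12⟫ = 0 := by rw [w3, w12, inner_myvec]; ring
lemma e5_6 : ⟪w5, w6⟫ = 0 := by rw [w5, w6, inner_myvec]; ring
lemma e5_9 : ⟪w5, w9⟫ = 0 := by rw [w5, w9, inner_myvec]; ring
lemma e5_12 : ⟪w5, w12⟫ = 0 := by rw [w5, w12, inner_myvec]; ring
lemma e6_8 : ⟪w6, w8⟫ = 0 := by rw [w6, w8, inner_myvec]; ring
lemma e6_11 : ⟪w6, w11⟫ = 0 := by rw [w6, w11, inner_myvec]; ring
lemma e7_10 : ⟪w7, w10⟫ = 0 := by rw [w7, w10, inner_myvec]; ring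
lemma e7_11 : ⟪w7, w11⟫ = 0 := by rw [w7, w11, inner_myvec]; ring
lemma e7_12 : ⟪w7, w12⟫ = 0 := by rw [w7, w12, inner_myvec]; ring
lemma e8_10 : ⟪w8, w10⟫ = 0 := by rw [w8, w10, inner_myvec]; ring
lemma e9_10 : ⟪w9, w10⟫ = 0 := by rw [w9, w10, inner_myvec]; ring

lemma ne_of_inner_eq_zero {x y : EuclideanSpace ℝ (Fin 3)} (hy : ‖y‖ = 1)
    (h : ⟪x, y⟫ = 0) : x ≠ y := by
  intro he
  rw [he, real_inner_self_eq_norm_sq, hy] at h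
  norm_num at h

open scoped Classical in
def Sgraph : Finset (EuclideanSpace ℝ (Fin 3)) := {w0, w1, w2, w3, w4, w5, w6, w7, w8, w9, w10, w11, w12}

lemma m0 : w0 ∈ Sgraph := by simp [Sgraph]
lemma m1 : w1 ∈ Sgraph := by simp [Sgraph]
lemma m2 : w2 ∈ Sgraph := by simp [Sgraph]
lemma m3 : w3 ∈ Sgraph := by simp [Sgraph]
lemma m4 : w4 ∈ Sgraph := by simp [Sgraph]
lemma m5 : w5 ∈ Sgraph := by simp [Sgraph]
lemma m6 : w6 ∈ Sgraph := by simp [Sgraph]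
lemma m7 : w7 ∈ Sgraph := by simp [Sgraph]
lemma m8 : w8 ∈ Sgraph := by simp [Sgraph]
lemma m9 : w9 ∈ Sgraph := by simp [Sgraph]
lemma m10 : w10 ∈ Sgraph := by simp [Sgraph]
lemma m11 : w11 ∈ Sgraph := by simp [Sgraph]
lemma m12 : w12 ∈ Sgraph := by simp [Sgraph]

def col4 (x : EuclideanSpace ℝ (Fin 3)) : Fin 4 :=
  if 0 < x 2 ∧ 0 ≤ x 1 then 0
  else if 0 < x 1 then 1
  else if 0 < x 2 then 3
  else 2

lemma myvec_apply (a b c : ℝ) :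
    (myvec a b c) 0 = a ∧ (myvec a b c) 1 = b ∧ (myvec a b c) 2 = c := by
  refine ⟨rfl, rfl, rfl⟩

lemma f0 : col4 w0 = 0 := by
  rw [w0]; unfold col4
  simp only [myvec_apply]
  norm_num [t2pos, t3pos, s2nlt, s3nlt, s2nle, s3nle, Real.sqrt_pos, Real.sqrt_nonneg]
lemma f1 : col4 w1 = 1 := by
  rw [w1]; unfold col4
  simp only [myvec_apply]
  norm_num [t2pos, t3pos, s2nlt, s3nlt, s2nle, s3nle, Real.sqrt_pos, Real.sqrt_nonneg]
lemma f2 : col4 w2 = 0 := by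
  rw [w2]; unfold col4
  simp only [myvec_apply]
  norm_num [t2pos, t3pos, s2nlt, s3nlt, s2nle, s3nle, Real.sqrt_pos, Real.sqrt_nonneg]
lemma f3 : col4 w3 = 1 := by
  rw [w3]; unfold col4
  simp only [myvec_apply]
  norm_num [t2pos, t3pos, s2nlt, s3nlt, s2nle, s3nle, Real.sqrt_pos, Real.sqrt_nonneg]
lemma f4 : col4 w4 = 2 := by
  rw [w4]; unfold col4
  simp only [myvec_apply]
  norm_num [t2pos, t3pos, s2nlt, s3nlt, s2nle, s3nle, Real.sqrt_pos, Real.sqrt_nonneg]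
lemma f5 : col4 w5 = 0 := by
  rw [w5]; unfold col4
  simp only [myvec_apply]
  norm_num [t2pos, t3pos, s2nlt, s3nlt, s2nle, s3nle, Real.sqrt_pos, Real.sqrt_nonneg]
lemma f6 : col4 w6 = 2 := by
  rw [w6]; unfold col4
  simp only [myvec_apply]
  norm_num [t2pos, t3pos, s2nlt, s3nlt, s2nle, s3nle, Real.sqrt_pos, Real.sqrt_nonneg]
lemma f7 : col4 w7 = 1 := by
  rw [w7]; unfold col4
  simp only [myvec_apply]
  norm_num [t2pos, t3pos, s2nlt, s3nlt, s2nle, s3nle, Real.sqrt_pos, Real.sqrt_nonneg]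
lemma f8 : col4 w8 = 0 := by
  rw [w8]; unfold col4
  simp only [myvec_apply]
  norm_num [t2pos, t3pos, s2nlt, s3nlt, s2nle, s3nle, Real.sqrt_pos, Real.sqrt_nonneg]
lemma f9 : col4 w9 = 1 := by
  rw [w9]; unfold col4
  simp only [myvec_apply]
  norm_num [t2pos, t3pos, s2nlt, s3nlt, s2nle, s3nle, Real.sqrt_pos, Real.sqrt_nonneg]
lemma f10 : col4 w10 = 2 := by
  rw [w10]; unfold col4
  simp only [myvec_apply]
  norm_num [t2pos, t3pos, s2nlt, s3nlt, s2nle, s3nle, Real.sqrt_pos, Real.sqrt_nonneg]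
lemma f11 : col4 w11 = 3 := by
  rw [w11]; unfold col4
  simp only [myvec_apply]
  norm_num [t2pos, t3pos, s2nlt, s3nlt, s2nle, s3nle, Real.sqrt_pos, Real.sqrt_nonneg]
lemma f12 : col4 w12 = 2 := by
  rw [w12]; unfold col4
  simp only [myvec_apply]
  norm_num [t2pos, t3pos, s2nlt, s3nlt, s2nle, s3nle, Real.sqrt_pos, Real.sqrt_nonneg]

set_option maxRecDepth 4000 in
set_option synthInstance.maxSize 2000 in
set_option synthInstance.maxHeartbeats 1000000 in
theorem comb13 : ∀ c0 : Fin 3, ∀ c1 : Fin 3, c0 ≠ c1 → ∀ c2 : Fin 3, ∀ c3 : Fin 3, c2 ≠ c3 → ∀ c4 : Fin 3, c0 ≠ c4 → c1 ≠ c4 → c2 ≠ c4 → c3 ≠ c4 → ∀ c5 : Fin 3, c1 ≠ c5 → ∀ c6 : Fin 3, c1 ≠ c6 → c5 ≠ c6 → ∀ c7 : Fin 3, c0 ≠ c7 → ∀ c8 : Fin 3, c3 ≠ c8 → c6 ≠ c8 → ∀ c9 : Fin 3, c2 ≠ c9 → c5 ≠ c9 → ∀ c10 : Fin 3, c0 ≠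 c10 → c7 ≠ c10 → c8 ≠ c10 → c9 ≠ c10 → ∀ c11 : Fin 3, c2 ≠ c11 → c6 ≠ c11 → c7 ≠ c11 → ∀ c12 : Fin 3, c3 ≠ c12 → c5 ≠ c12 → c7 ≠ c12 → False := by decide

theorem not_col3 : ¬ (orthGraphOn Sgraph).Colorable 3 := by
  rintro ⟨C⟩
  have x0 := C ⟨w0, m0⟩
  have x1 := C ⟨w1, m1⟩
  have x2 := C ⟨w2, m2⟩
  have x3 := C ⟨w3, m3⟩
  have x4 := C ⟨w4, m4⟩
  have x5 := C ⟨w5, m5⟩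
  have x6 := C ⟨w6, m6⟩
  have x7 := C ⟨w7, m7⟩
  have x8 := C ⟨w8, m8⟩
  have x9 := C ⟨w9, m9⟩
  have x10 := C ⟨w10, m10⟩
  have x11 := C ⟨w11, m11⟩
  have x12 := C ⟨w12, m12⟩
  have h0_1 : C ⟨w0, m0⟩ ≠ C ⟨w1, m1⟩ := C.valid ⟨ne_of_inner_eq_zero nw1 e0_1, e0_1⟩
  have h0_4 : C ⟨w0, m0⟩ ≠ C ⟨w4, m4⟩ := C.valid ⟨ne_of_inner_eq_zero nw4 e0_4, e0_4⟩
  have h0_7 : C ⟨w0, m0⟩ ≠ C ⟨w7, m7⟩ := C.valid ⟨ne_of_inner_eq_zero nw7 e0_7, e0_7⟩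
  have h0_10 : C ⟨w0, m0⟩ ≠ C ⟨w10, m10⟩ := C.valid ⟨ne_of_inner_eq_zero nw10 e0_10, e0_10⟩
  have h1_4 : C ⟨w1, m1⟩ ≠ C ⟨w4, m4⟩ := C.valid ⟨ne_of_inner_eq_zero nw4 e1_4, e1_4⟩
  have h1_5 : C ⟨w1, m1⟩ ≠ C ⟨w5, m5⟩ := C.valid ⟨ne_of_inner_eq_zero nw5 e1_5, e1_5⟩
  have h1_6 : C ⟨w1, m1⟩ ≠ C ⟨w6, m6⟩ := C.valid ⟨ne_of_inner_eq_zero nw6 e1_6, e1_6⟩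
  have h2_3 : C ⟨w2, m2⟩ ≠ C ⟨w3, m3⟩ := C.valid ⟨ne_of_inner_eq_zero nw3 e2_3, e2_3⟩
  have h2_4 : C ⟨w2, m2⟩ ≠ C ⟨w4, m4⟩ := C.valid ⟨ne_of_inner_eq_zero nw4 e2_4, e2_4⟩
  have h2_9 : C ⟨w2, m2⟩ ≠ C ⟨w9, m9⟩ := C.valid ⟨ne_of_inner_eq_zero nw9 e2_9, e2_9⟩
  have h2_11 : C ⟨w2, m2⟩ ≠ C ⟨w11, m11⟩ := C.valid ⟨ne_of_inner_eq_zero nw11 e2_11, e2_11⟩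
  have h3_4 : C ⟨w3, m3⟩ ≠ C ⟨w4, m4⟩ := C.valid ⟨ne_of_inner_eq_zero nw4 e3_4, e3_4⟩
  have h3_8 : C ⟨w3, m3⟩ ≠ C ⟨w8, m8⟩ := C.valid ⟨ne_of_inner_eq_zero nw8 e3_8, e3_8⟩
  have h3_12 : C ⟨w3, m3⟩ ≠ C ⟨w12, m12⟩ := C.valid ⟨ne_of_inner_eq_zero nw12 e3_12, e3_12⟩
  have h5_6 : C ⟨w5, m5⟩ ≠ C ⟨w6, m6⟩ := C.valid ⟨ne_of_inner_eq_zero nw6 e5_6, e5_6⟩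
  have h5_9 : C ⟨w5, m5⟩ ≠ C ⟨w9, m9⟩ := C.valid ⟨ne_of_inner_eq_zero nw9 e5_9, e5_9⟩
  have h5_12 : C ⟨w5, m5⟩ ≠ C ⟨w12, m12⟩ := C.valid ⟨ne_of_inner_eq_zero nw12 e5_12, e5_12⟩
  have h6_8 : C ⟨w6, m6⟩ ≠ C ⟨w8, m8⟩ := C.valid ⟨ne_of_inner_eq_zero nw8 e6_8, e6_8⟩
  have h6_11 : C ⟨w6, m6⟩ ≠ C ⟨w11, m11⟩ := C.valid ⟨ne_of_inner_eq_zero nw11 e6_11, e6_11⟩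
  have h7_10 : C ⟨w7, m7⟩ ≠ C ⟨w10, m10⟩ := C.valid ⟨ne_of_inner_eq_zero nw10 e7_10, e7_10⟩
  have h7_11 : C ⟨w7, m7⟩ ≠ C ⟨w11, m11⟩ := C.valid ⟨ne_of_inner_eq_zero nw11 e7_11, e7_11⟩
  have h7_12 : C ⟨w7, m7⟩ ≠ C ⟨w12, m12⟩ := C.valid ⟨ne_of_inner_eq_zero nw12 e7_12, e7_12⟩
  have h8_10 : C ⟨w8, m8⟩ ≠ C ⟨w10, m10⟩ := C.valid ⟨ne_of_inner_eq_zero nw10 e8_10, e8_10⟩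
  have h9_10 : C ⟨w9, m9⟩ ≠ C ⟨w10, m10⟩ := C.valid ⟨ne_of_inner_eq_zero nw10 e9_10, e9_10⟩
  exact comb13 (C ⟨w0, m0⟩) (C ⟨w1, m1⟩) h0_1 (C ⟨w2, m2⟩) (C ⟨w3, m3⟩) h2_3 (C ⟨w4, m4⟩) h0_4 h1_4 h2_4 h3_4 (C ⟨w5, m5⟩) h1_5 (C ⟨w6, m6⟩) h1_6 h5_6 (C ⟨w7, m7⟩) h0_7 (C ⟨w8, m8⟩) h3_8 h6_8 (C ⟨w9, m9⟩) h2_9 h5_9 (C ⟨w10, m10⟩) h0_10 h7_10 h8_10 h9_10 (C ⟨w11, m11⟩) h2_11 h6_11 h7_11 (C ⟨w12, m12⟩) h3_12 h5_12 h7_12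

set_option maxHeartbeats 4000000 in
def coloring4 : (orthGraphOn Sgraph).Coloring (Fin 4) := by
  refine SimpleGraph.Coloring.mk (fun x => col4 x.1) ?_
  rintro u v ⟨hne, hinner⟩ hc0
  have hc : col4 (u : EuclideanSpace ℝ (Fin 3)) = col4 (v : EuclideanSpace ℝ (Fin 3)) := hc0
  have hu : (u : EuclideanSpace ℝ (Fin 3)) ∈ Sgraph := u.2
  have hv : (v : EuclideanSpace ℝ (Fin 3)) ∈ Sgraph := v.2
  simp only [Sgraph, Finset.mem_insert, Finset.mem_singleton] at hu hv
  rcases hu with (h|h|h|h|h|h|h|h|h|h|h|h|h) <;> rcases hv with (h'|h'|h'|h'|h'|h'|h'|h'|h'|h'|h'|h'|h') <;>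
    first
    | exact hne (h.trans h'.symm)
    | (rw [h, h'] at hc
       simp only [f0, f1, f2, f3, f4, f5, f6, f7, f8, f9, f10, f11, f12] at hc
       exact absurd hc (by decide))
    | (rw [h, h'] at hinner
       simp only [w0, w1, w2, w3, w4, w5, w6, w7, w8, w9, w10, w11, w12, inner_myvec] at hinner
       nlinarith [t2pos, t3pos, mul_pos t2pos t2pos, mul_pos t3pos t3pos, mul_pos t2pos t3pos, hinner])

theorem col4able : (orthGraphOn Sgraph).Colorable 4 := ⟨coloring4⟩

/-- There is a finite set of unit vectors in `ℝ³` whose orthogonality graph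
has chromatic number four. -/
theorem exists_finite_four_chromatic_orthogonality_graph :
    ∃ S : Finset (EuclideanSpace ℝ (Fin 3)),
      (∀ x ∈ S, ‖x‖ = 1) ∧ (orthGraphOn S).chromaticNumber = 4 := by
  refine ⟨Sgraph, ?_, ?_⟩
  · intro x hx
    simp only [Sgraph, Finset.mem_insert, Finset.mem_singleton] at hx
    rcases hx with h|h|h|h|h|h|h|h|h|h|h|h|h <;> rw [h] <;>
      first
      | exact nw0 | exact nw1 | exact nw2 | exact nw3 | exact nw4 | exact nw5
      | exact nw6 | exact nw7 | exact nw8 | exact nw9 | exact nw10 | exact nw11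
      | exact nw12
  · have le4 : (orthGraphOn Sgraph).chromaticNumber ≤ (4:ℕ) :=
      SimpleGraph.chromaticNumber_le_iff_colorable.mpr col4able
    have n3 : ¬ (orthGraphOn Sgraph).chromaticNumber ≤ (3:ℕ) := fun h =>
      not_col3 (SimpleGraph.chromaticNumber_le_iff_colorable.mp h)
    have hne : (orthGraphOn Sgraph).chromaticNumber ≠ ⊤ := by
      intro h; rw [h] at le4; exact absurd le4 (by simp)
    lift (orthGraphOn Sgraph).chromaticNumber to ℕ using hne with n hn
    have h1 : n ≤ 4 := by exact_mod_cast le4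
    have h2 : ¬ (n ≤ 3) := fun h => n3 (by exact_mod_cast h)
    have : n = 4 := by omega
    rw [this]; rfl
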